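/- Let μ be a probability measure on a measurable space Ω, let f : ℝ → ℝ be convex and differentiable with f(1) = 0, and let δ > 0. Let 𝒜 be any nonempty family of measurable subsets of Ω (the error sets attainable by a family of classifiers) and suppose inf_{A ∈ 𝒜} R_adv(A) < 1. Then a set A* ∈ 𝒜 minimizes R_adv over 𝒜 if and only if A* minimizes μ over 𝒜; that is, adversarial risk minimization and ordinary risk minimization with the 0-1 loss have exactly the same set of minimizers in the regime where the adversarial risk is below 1. -/

import Mathlib

open MeasureTheory

/-- The uncertainty set of density ratios: measurable, nonnegative functions `r` with
`∫ f (r ω) ∂μ ≤ δ` and `∫ r ω ∂μ = 1` (both integrals existing). -/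
def Uf {Ω : Type*} [MeasurableSpace Ω] (μ : Measure Ω) (f : ℝ → ℝ) (δ : ℝ) :
    Set (Ω → ℝ) :=
  {r | Measurable r ∧ (∀ ω, 0 ≤ r ω) ∧
    Integrable (fun ω => f (r ω)) μ ∧ Integrable r μ ∧
    (∫ ω, f (r ω) ∂μ) ≤ δ ∧ (∫ ω, r ω ∂μ) = 1}

/-- The adversarial risk of a classifier with error set `A` under the 0-1 loss:
the supremum of `∫_A r dμ` over density ratios `r` in the uncertainty set. -/
noncomputable def Radv {Ω : Type*} [MeasurableSpace Ω] (μ : Measure Ω)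
    (f : ℝ → ℝ) (δ : ℝ) (A : Set Ω) : ℝ :=
  sSup {x | ∃ r ∈ Uf μ f δ, x = ∫ ω in A, r ω ∂μ}

open scoped Classical

section helpers

variable {Ω : Type*} [MeasurableSpace Ω] (μ : Measure Ω) [IsProbabilityMeasure μ]
  (f : ℝ → ℝ) (δ : ℝ)

lemma const_one_mem (hf1 : f 1 = 0) (hδ : 0 ≤ δ) : (fun _ : Ω => (1:ℝ)) ∈ Uf μ f δ := by
  refine ⟨measurable_const, fun _ => zero_le_one, ?_, integrable_const _, ?_, ?_⟩
  · simpa [hf1] using (integrable_const (0:ℝ) : Integrable (fun _ : Ω => (0:ℝ)) μ)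
  · simp [hf1, hδ]
  · simp

lemma mem_uf_setIntegral_le_one {r : Ω → ℝ} (hr : r ∈ Uf μ f δ) (A : Set Ω) :
    ∫ ω in A, r ω ∂μ ≤ 1 := by
  have := setIntegral_le_integral (μ := μ) (s := A) hr.2.2.2.1
    (Filter.Eventually.of_forall hr.2.1)
  simpa [hr.2.2.2.2.2] using this

lemma S_bddAbove (A : Set Ω) :
    BddAbove {x | ∃ r ∈ Uf μ f δ, x = ∫ ω in A, r ω ∂μ} := by
  refine ⟨1, fun x hx => ?_⟩
  obtain ⟨r, hr, rfl⟩ := hx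
  exact mem_uf_setIntegral_le_one μ f δ hr A

lemma measure_le_Radv (hf1 : f 1 = 0) (hδ : 0 ≤ δ) (A : Set Ω) :
    (μ A).toReal ≤ Radv μ f δ A := by
  refine le_csSup (S_bddAbove μ f δ A) ⟨fun _ => 1, const_one_mem μ f δ hf1 hδ, ?_⟩
  rw [setIntegral_const, smul_eq_mul, mul_one, measureReal_def]

lemma Radv_le_one (hf1 : f 1 = 0) (hδ : 0 ≤ δ) (A : Set Ω) : Radv μ f δ A ≤ 1 := by
  refine csSup_le ⟨(μ A).toReal, fun _ => 1, const_one_mem μ f δ hf1 hδ, by rw [setIntegral_const, smul_eq_mul, mul_one, measureReal_def]⟩ ?_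
  rintro x ⟨r, hr, rfl⟩
  exact mem_uf_setIntegral_le_one μ f δ hr A

lemma jensen_set (hconv : ConvexOn ℝ Set.univ f) (hcont : Continuous f)
    {A : Set Ω} (hApos : μ A ≠ 0) {r : Ω → ℝ}
    (hri : Integrable r μ) (hfi : Integrable (fun ω => f (r ω)) μ) :
    (μ A).toReal * f ((∫ ω in A, r ω ∂μ) / (μ A).toReal) ≤ ∫ ω in A, f (r ω) ∂μ := by
  haveI : NeZero (μ.restrict A) := ⟨fun h => hApos (by
    rw [← Measure.restrict_apply_univ A (μ := μ), h]; simp)⟩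
  have hp : 0 < (μ A).toReal :=
    ENNReal.toReal_pos hApos (ne_top_of_le_ne_top (by simp) (measure_mono (Set.subset_univ A)))
  have h := hconv.map_average_le hcont.continuousOn isClosed_univ
    (Filter.Eventually.of_forall fun _ => Set.mem_univ _) hri.restrict
    (g := f) (hfi.restrict : Integrable (f ∘ r) (μ.restrict A))
  rw [average_eq, average_eq, measureReal_def, Measure.restrict_apply_univ, smul_eq_mul, smul_eq_mul] at h
  have h2 := mul_le_mul_of_nonneg_left h hp.le
  rw [mul_inv_cancel_left₀ hp.ne'] at h2
  calc (μ A).toReal * f ((∫ ω in A, r ω ∂μ) / (μ A).toReal)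
      = (μ A).toReal * f ((μ A).toReal⁻¹ * ∫ ω in A, r ω ∂μ) := by
        rw [div_eq_inv_mul]
    _ ≤ ∫ ω in A, f (r ω) ∂μ := h2

lemma setIntegral_zero_of_measure_zero {A : Set Ω} (h0 : μ A = 0) (g : Ω → ℝ) :
    ∫ ω in A, g ω ∂μ = 0 := by
  rw [Measure.restrict_eq_zero.mpr h0, integral_zero_measure]

lemma integrable_ite_const {B : Set Ω} (hB : MeasurableSet B) (c d : ℝ) :
    Integrable (fun ω => if ω ∈ B then c else d) μ := by
  have heq : (fun ω => if ω ∈ B then c else d) =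
      fun ω => B.indicator (fun _ => c - d) ω + d := by
    funext ω; by_cases h : ω ∈ B <;> simp [h]
  rw [heq]
  exact ((integrable_const _).indicator hB).add (integrable_const d)

lemma integral_ite_const {B : Set Ω} (hB : MeasurableSet B) (c d : ℝ) :
    ∫ ω, (if ω ∈ B then c else d) ∂μ = c * (μ B).toReal + d * (1 - (μ B).toReal) := by
  have heq : (fun ω => if ω ∈ B then c else d) =
      fun ω => B.indicator (fun _ => c - d) ω + d := by
    funext ω; by_cases h : ω ∈ B <;> simp [h]
  rw [heq, integral_add ((integrable_const _).indicator hB) (integrable_const d),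
    integral_indicator_const _ hB, integral_const]
  simp only [measureReal_def, measure_univ, ENNReal.toReal_one, smul_eq_mul, one_smul]
  ring

lemma key_construct (hconv : ConvexOn ℝ Set.univ f) (hcont : Continuous f)
    (hf1 : f 1 = 0) (hδ : 0 ≤ δ) {A B : Set Ω}
    (hA : MeasurableSet A) (hB : MeasurableSet B) (hAB : μ A ≤ μ B)
    (hp1 : (μ A).toReal < 1) {r : Ω → ℝ} (hr : r ∈ Uf μ f δ) :
    (∫ ω in A, r ω ∂μ) +
        ((μ B).toReal - (μ A).toReal) * (1 - ∫ ω in A, r ω ∂μ) / (1 - (μ A).toReal)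
      ∈ {x | ∃ r' ∈ Uf μ f δ, x = ∫ ω in B, r' ω ∂μ} := by
  obtain ⟨hrm, hr0, hfri, hri, hrδ, hr1⟩ := hr
  set p : ℝ := (μ A).toReal with hp
  set q : ℝ := (μ B).toReal with hq
  set x : ℝ := ∫ ω in A, r ω ∂μ with hxdef
  have hAne : μ A ≠ ⊤ := measure_ne_top μ A
  have hBne : μ B ≠ ⊤ := measure_ne_top μ B
  have hpq : p ≤ q := ENNReal.toReal_mono hBne hAB
  have hp0 : 0 ≤ p := ENNReal.toReal_nonneg
  have hq1 : q ≤ 1 := by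
    have := ENNReal.toReal_mono (by simp) (measure_mono (Set.subset_univ B) : μ B ≤ μ Set.univ)
    simpa using this
  have hx0 : 0 ≤ x := setIntegral_nonneg hA fun ω _ => hr0 ω
  have hx1 : x ≤ 1 := mem_uf_setIntegral_le_one μ f δ ⟨hrm, hr0, hfri, hri, hrδ, hr1⟩ A
  have h1p : 0 < 1 - p := by linarith
  by_cases hB0 : μ B = 0
  · have hA0 : μ A = 0 := le_antisymm (hAB.trans hB0.le) zero_le
    have hx : x = 0 := setIntegral_zero_of_measure_zero μ hA0 r
    have hq0 : q = 0 := by rw [hq, hB0]; simp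
    have hP0 : p = 0 := by rw [hp, hA0]; simp
    refine ⟨fun _ => 1, const_one_mem μ f δ hf1 hδ, ?_⟩
    rw [setIntegral_zero_of_measure_zero μ hB0 _]
    rw [hx, hq0, hP0]; ring
  · have hqpos : 0 < q := ENNReal.toReal_pos hB0 hBne
    -- conditional averages
    set b : ℝ := (1 - x) / (1 - p) with hbdef
    have hb0 : 0 ≤ b := div_nonneg (by linarith) h1p.le
    have hcompl : ∫ ω in Aᶜ, r ω ∂μ = 1 - x := by
      have := integral_add_compl hA hri
      rw [hr1] at this; linarith
    have hpcompl : (μ Aᶜ).toReal = 1 - p := by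
      have hadd : μ A + μ Aᶜ = 1 := by
        rw [measure_add_measure_compl hA, measure_univ]
      have := congrArg ENNReal.toReal hadd
      rw [ENNReal.toReal_add hAne (measure_ne_top μ Aᶜ)] at this
      simp only [ENNReal.toReal_one] at this
      linarith
    have hAcne : μ Aᶜ ≠ 0 := by
      intro h
      rw [h] at hpcompl
      simp at hpcompl
      linarith
    have hfb : (1 - p) * f b ≤ ∫ ω in Aᶜ, f (r ω) ∂μ := by
      have := jensen_set μ f hconv hcont hAcne hri hfri
      rwa [hpcompl, hcompl] at this
    -- value on A
    have hpa : ∃ a : ℝ, 0 ≤ a ∧ p * a = x ∧ p * f a ≤ ∫ ω in A, f (r ω) ∂μ := by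
      by_cases hA0 : μ A = 0
      · refine ⟨1, zero_le_one, ?_, ?_⟩
        · rw [hp, hA0]; simp [hxdef, setIntegral_zero_of_measure_zero μ hA0 r]
        · rw [hp, hA0, setIntegral_zero_of_measure_zero μ hA0 _]; simp [hf1]
      · have hppos : 0 < p := ENNReal.toReal_pos hA0 hAne
        refine ⟨x / p, div_nonneg hx0 hppos.le,
          by rw [mul_comm, div_mul_cancel₀ x hppos.ne'], ?_⟩
        exact jensen_set μ f hconv hcont hA0 hri hfri
    obtain ⟨a, ha0, hpa, hfa⟩ := hpa
    set c : ℝ := (p * a + (q - p) * b) / q with hcdef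
    have hc0 : 0 ≤ c := by
      apply div_nonneg _ hqpos.le
      have : 0 ≤ (q - p) * b := mul_nonneg (by linarith) hb0
      nlinarith
    have hceq : c = (p / q) * a + ((q - p) / q) * b := by
      rw [hcdef, div_mul_eq_mul_div, div_mul_eq_mul_div, ← add_div]
    have hfc : f c ≤ (p / q) * f a + ((q - p) / q) * f b := by
      have h2 := hconv.2 (Set.mem_univ a) (Set.mem_univ b)
        (div_nonneg hp0 hqpos.le) (div_nonneg (sub_nonneg.mpr hpq) hqpos.le)
        (show p / q + (q - p) / q = 1 by
          rw [← add_div, show p + (q - p) = q by ring, div_self hqpos.ne'])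
      rw [smul_eq_mul, smul_eq_mul] at h2
      rw [hceq]
      exact h2
    have hqfc : q * f c ≤ p * f a + (q - p) * f b := by
      have h2 := mul_le_mul_of_nonneg_left hfc hqpos.le
      have h3 : q * ((p / q) * f a + ((q - p) / q) * f b) = p * f a + (q - p) * f b := by
        field_simp
      linarith
    refine ⟨fun ω => if ω ∈ B then c else b, ⟨?_, ?_, ?_, ?_, ?_, ?_⟩, ?_⟩
    · exact Measurable.ite hB measurable_const measurable_const
    · intro ω; by_cases h : ω ∈ B <;> simp [h, hc0, hb0]
    · have heq : (fun ω => f (if ω ∈ B then c else b)) =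
          fun ω => if ω ∈ B then f c else f b :=
        funext fun ω => apply_ite f (ω ∈ B) c b
      exact heq ▸ integrable_ite_const μ hB (f c) (f b)
    · exact integrable_ite_const μ hB c b
    · have heq : (fun ω => f (if ω ∈ B then c else b)) =
          fun ω => if ω ∈ B then f c else f b :=
        funext fun ω => apply_ite f (ω ∈ B) c b
      have hintadd : (∫ ω in A, f (r ω) ∂μ) + ∫ ω in Aᶜ, f (r ω) ∂μ
          = ∫ ω, f (r ω) ∂μ := integral_add_compl hA hfri
      rw [show (fun ω => f (if ω ∈ B then c else b)) = fun ω => if ω ∈ B then f c else f b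
        from heq, integral_ite_const μ hB]
      linarith [hqfc, hfa, hfb, hintadd, hrδ]
    · rw [integral_ite_const μ hB]
      have hcq : c * q = p * a + (q - p) * b := by
        rw [hcdef, div_mul_cancel₀ _ hqpos.ne']
      have hbp : (1 - p) * b = 1 - x := by
        rw [hbdef, mul_comm, div_mul_cancel₀ _ h1p.ne']
      linarith [hcq, hbp, hpa]
    · have h8 : ∫ ω in B, (if ω ∈ B then c else b) ∂μ = ∫ ω in B, c ∂μ :=
        setIntegral_congr_fun hB fun ω hω => if_pos hω
      rw [h8, setIntegral_const, smul_eq_mul, measureReal_def]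
      have hcq : c * q = p * a + (q - p) * b := by
        rw [hcdef, div_mul_cancel₀ _ hqpos.ne']
      have h1 : (q - p) * (1 - x) / (1 - p) = (q - p) * b := by
        rw [hbdef, mul_div_assoc]
      rw [h1]
      linarith [hcq, hpa]

lemma Radv_mono (hconv : ConvexOn ℝ Set.univ f) (hcont : Continuous f)
    (hf1 : f 1 = 0) (hδ : 0 ≤ δ) {A B : Set Ω}
    (hA : MeasurableSet A) (hB : MeasurableSet B) (hAB : μ A ≤ μ B) :
    Radv μ f δ A ≤ Radv μ f δ B := by
  refine csSup_le ⟨(μ A).toReal, fun _ => 1, const_one_mem μ f δ hf1 hδ,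
    by rw [setIntegral_const, smul_eq_mul, mul_one, measureReal_def]⟩ ?_
  rintro y ⟨r, hr, rfl⟩
  by_cases hp1 : (μ A).toReal < 1
  · have hmem := key_construct μ f δ hconv hcont hf1 hδ hA hB hAB hp1 hr
    have hle : ∫ ω in A, r ω ∂μ + ((μ B).toReal - (μ A).toReal) *
        (1 - ∫ ω in A, r ω ∂μ) / (1 - (μ A).toReal) ≤ Radv μ f δ B :=
      le_csSup (S_bddAbove μ f δ B) hmem
    have hx1 := mem_uf_setIntegral_le_one μ f δ hr A
    have hpq : (μ A).toReal ≤ (μ B).toReal :=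
      ENNReal.toReal_mono (measure_ne_top μ B) hAB
    have h2 : (0:ℝ) ≤ ((μ B).toReal - (μ A).toReal) * (1 - ∫ ω in A, r ω ∂μ)
        / (1 - (μ A).toReal) :=
      div_nonneg (mul_nonneg (sub_nonneg.mpr hpq) (by linarith)) (by linarith)
    linarith
  · push_neg at hp1
    have hq1 : (1:ℝ) ≤ (μ B).toReal :=
      le_trans hp1 (ENNReal.toReal_mono (measure_ne_top μ B) hAB)
    calc ∫ ω in A, r ω ∂μ ≤ 1 := mem_uf_setIntegral_le_one μ f δ hr A
      _ ≤ (μ B).toReal := hq1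
      _ ≤ Radv μ f δ B := measure_le_Radv μ f δ hf1 hδ B

lemma Radv_strict (hconv : ConvexOn ℝ Set.univ f) (hcont : Continuous f)
    (hf1 : f 1 = 0) (hδ : 0 ≤ δ) {A B : Set Ω}
    (hA : MeasurableSet A) (hB : MeasurableSet B) (hAB : μ A < μ B)
    (hRA : Radv μ f δ A < 1) : Radv μ f δ A < Radv μ f δ B := by
  have hpq : (μ A).toReal < (μ B).toReal :=
    (ENNReal.toReal_lt_toReal (measure_ne_top μ A) (measure_ne_top μ B)).mpr hAB
  have hq1 : (μ B).toReal ≤ 1 := by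
    have := ENNReal.toReal_mono (by simp)
      (measure_mono (Set.subset_univ B) : μ B ≤ μ Set.univ)
    simpa using this
  have hp1 : (μ A).toReal < 1 := lt_of_lt_of_le hpq hq1
  set ε : ℝ := ((μ B).toReal - (μ A).toReal) * (1 - Radv μ f δ A) / (1 - (μ A).toReal)
    with hεdef
  have hε : 0 < ε :=
    div_pos (mul_pos (by linarith) (by linarith)) (by linarith)
  have hle : Radv μ f δ A ≤ Radv μ f δ B - ε := by
    refine csSup_le ⟨∫ ω in A, (1:ℝ) ∂μ, fun _ => 1, const_one_mem μ f δ hf1 hδ, rfl⟩ ?_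
    rintro y ⟨r, hr, rfl⟩
    have hmem := key_construct μ f δ hconv hcont hf1 hδ hA hB hAB.le hp1 hr
    have hyB : ∫ ω in A, r ω ∂μ + ((μ B).toReal - (μ A).toReal) *
        (1 - ∫ ω in A, r ω ∂μ) / (1 - (μ A).toReal) ≤ Radv μ f δ B :=
      le_csSup (S_bddAbove μ f δ B) hmem
    have hxA : ∫ ω in A, r ω ∂μ ≤ Radv μ f δ A :=
      le_csSup (S_bddAbove μ f δ A) ⟨r, hr, rfl⟩
    have hmono : ((μ B).toReal - (μ A).toReal) * (1 - Radv μ f δ A)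
        ≤ ((μ B).toReal - (μ A).toReal) * (1 - ∫ ω in A, r ω ∂μ) :=
      mul_le_mul_of_nonneg_left (by linarith) (by linarith)
    have hdiv : ε ≤ ((μ B).toReal - (μ A).toReal) * (1 - ∫ ω in A, r ω ∂μ)
        / (1 - (μ A).toReal) := by
      rw [hεdef]
      exact (div_le_div_iff_of_pos_right (by linarith)).mpr hmono
    linarith
  linarith

end helpers

/-- In the regime where the infimum of the adversarial risk over a family `𝒜` of error sets
is below `1`, adversarial risk minimization and ordinary risk minimization with the 0-1 loss
have exactly the same minimizers over `𝒜`. -/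
theorem stmt4 {Ω : Type*} [MeasurableSpace Ω] (μ : Measure Ω) [IsProbabilityMeasure μ]
    (f : ℝ → ℝ) (hconv : ConvexOn ℝ Set.univ f) (hdiff : Differentiable ℝ f)
    (hf1 : f 1 = 0) (δ : ℝ) (hδ : 0 < δ)
    (𝒜 : Set (Set Ω)) (h𝒜ne : 𝒜.Nonempty) (h𝒜m : ∀ A ∈ 𝒜, MeasurableSet A)
    (hinf : sInf (Radv μ f δ '' 𝒜) < 1) :
    ∀ A ∈ 𝒜, ((∀ B ∈ 𝒜, Radv μ f δ A ≤ Radv μ f δ B) ↔ (∀ B ∈ 𝒜, μ A ≤ μ B)) := by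
  intro A hA
  have hAm := h𝒜m A hA
  have hcont := hdiff.continuous
  constructor
  · intro hmin B hB
    by_contra hc
    push_neg at hc
    have hRA1 : Radv μ f δ A < 1 := by
      refine lt_of_le_of_lt ?_ hinf
      refine le_csInf (h𝒜ne.image _) ?_
      rintro y ⟨C, hC, rfl⟩
      exact hmin C hC
    have hRB1 : Radv μ f δ B < 1 :=
      lt_of_le_of_lt (Radv_mono μ f δ hconv hcont hf1 hδ.le (h𝒜m B hB) hAm hc.le) hRA1
    have := Radv_strict μ f δ hconv hcont hf1 hδ.le (h𝒜m B hB) hAm hc hRB1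
    exact absurd (hmin B hB) (not_le.mpr this)
  · intro hmin B hB
    exact Radv_mono μ f δ hconv hcont hf1 hδ.le hAm (h𝒜m B hB) (hmin B hB)
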